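/- arXiv:2104.11175 — 4 statements merged into one kernel-verified Lean document; each statement's English description precedes it below -/
import Mathlib

section
/- Let $K$ be a number field, let $f \in K[x]$ be a monic polynomial of degree $d \geq 2$, let $\alpha \in K$, and let $N \geq 0$ be an integer. Let $\mathfrak{p}$ be a nonzero prime ideal of the ring of integers $\mathcal{O}_K$ such that all coefficients of $f$ and the element $\alpha$ have nonnegative $\mathfrak{p}$-adic valuation and the reduction of $f^N - \alpha$ modulo $\mathfrak{p}$ is a separable polynomial over the residue field $\mathcal{O}_K/\mathfrak{p}$. If $\mathfrak{p}$ splits completely in the splitting field $K_N(f,\alpha)$ of $f^N - \alpha$ over $K$ (i.e., every prime of the ring of integers of $K_N(f,\alpha)$ lying above $\mathfrak{p}$ has ramification index $1$ and residue field degree $1$ over $\mathcal{O}_K/\mathfrak{p}$), then $\#(\mathcal{O}_K/\mathfrak{p}) \geq d^N$. -/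
open Polynomial IsDedekindDomain NumberField

set_option maxHeartbeats 1000000
set_option synthInstance.maxHeartbeats 1000000

/-- The `N`-th iterate of a polynomial under composition, with `f^0 = X`. -/
noncomputable def polyIter {K : Type*} [CommRing K] (f : Polynomial K) : ℕ → Polynomial K
  | 0 => Polynomial.X
  | n + 1 => (polyIter f n).comp f

theorem stmt4 (K : Type*) [Field K] [NumberField K] (f : Polynomial K) (d : ℕ) (hd : 2 ≤ d)
    (hmonic : f.Monic) (hdeg : f.natDegree = d) (α : K) (N : ℕ)
    (v : HeightOneSpectrum (𝓞 K))
    (hcoeff : ∀ i : ℕ, v.valuation K (f.coeff i) ≤ 1) (hα : v.valuation K α ≤ 1)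
    (hsep : ∃ g : Polynomial (𝓞 K),
      g.map (algebraMap (𝓞 K) K) = polyIter f N - Polynomial.C α ∧
      (g.map (Ideal.Quotient.mk v.asIdeal)).Separable)
    (hsplit : ∀ Q : Ideal (𝓞 ((polyIter f N - Polynomial.C α).SplittingField)),
      Q.IsPrime → Q ≠ ⊥ →
      Q.comap (algebraMap (𝓞 K) (𝓞 ((polyIter f N - Polynomial.C α).SplittingField)))
        = v.asIdeal →
      Ideal.ramificationIdx'
        v.asIdeal Q = 1 ∧
      Ideal.inertiaDeg'
        v.asIdeal Q = 1) :
    d ^ N ≤ Nat.card (𝓞 K ⧸ v.asIdeal) := by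
  classical
  obtain ⟨g, hg, hgsep⟩ := hsep
  set P : Polynomial K := polyIter f N - Polynomial.C α with hPdef
  set L := P.SplittingField with hLdef
  haveI : NumberField L := NumberField.of_module_finite K L
  -- degrees and monicity of iterates
  have hiter : ∀ n, (polyIter f n).Monic ∧ (polyIter f n).natDegree = d ^ n := by
    intro n
    induction n with
    | zero => exact ⟨monic_X, by simp [polyIter]⟩
    | succ n ih =>
      refine ⟨ih.1.comp hmonic (by rw [hdeg]; omega), ?_⟩
      show ((polyIter f n).comp f).natDegree = _
      rw [natDegree_comp, ih.2, hdeg, pow_succ]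
  have hdegpos : 0 < (polyIter f N).natDegree := by
    rw [(hiter N).2]; exact pow_pos (by omega) N
  have hPmonic : P.Monic := by
    refine (hiter N).1.sub_of_left ?_
    exact lt_of_le_of_lt degree_C_le (natDegree_pos_iff_degree_pos.mp hdegpos)
  have hPdeg : P.natDegree = d ^ N := by
    rw [hPdef, natDegree_sub_C, (hiter N).2]
  -- the prime Q above v
  have hρinj : Function.Injective (algebraMap (𝓞 K) (𝓞 L)) := by
    have h2 : Function.Injective ((algebraMap (𝓞 L) L).comp (algebraMap (𝓞 K) (𝓞 L))) := by
      rw [← IsScalarTower.algebraMap_eq, IsScalarTower.algebraMap_eq (𝓞 K) K L]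
      exact (algebraMap K L).injective.comp (IsFractionRing.injective (𝓞 K) K)
    intro a b h
    exact h2 (by simp [RingHom.comp_apply, h])
  haveI : v.asIdeal.IsMaximal := v.isPrime.isMaximal v.ne_bot
  obtain ⟨Q, hQmax, hQcomap⟩ := Ideal.exists_ideal_over_maximal_of_isIntegral
    (S := 𝓞 L) v.asIdeal (by rw [(RingHom.injective_iff_ker_eq_bot _).mp hρinj]; exact bot_le)
  have hQne : Q ≠ ⊥ := by
    intro h
    exact v.ne_bot (by rw [← hQcomap, h, Ideal.comap_bot_of_injective _ hρinj])
  obtain ⟨-, hinert⟩ := hsplit Q hQmax.isPrime hQne hQcomap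
  haveI hlies : Q.LiesOver v.asIdeal := ⟨hQcomap.symm⟩
  rw [Ideal.inertiaDeg_algebraMap] at hinert
  -- residue fields
  letI : Field (𝓞 K ⧸ v.asIdeal) := Ideal.Quotient.field v.asIdeal
  letI : Field (𝓞 L ⧸ Q) := Ideal.Quotient.field Q
  have hbot : (⊥ : Subalgebra (𝓞 K ⧸ v.asIdeal) (𝓞 L ⧸ Q)) = ⊤ :=
    Subalgebra.bot_eq_top_of_finrank_eq_one hinert
  have hsurj : Function.Surjective (algebraMap (𝓞 K ⧸ v.asIdeal) (𝓞 L ⧸ Q)) := by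
    intro x
    have hx : x ∈ (⊥ : Subalgebra (𝓞 K ⧸ v.asIdeal) (𝓞 L ⧸ Q)) := by
      rw [hbot]; trivial
    exact Algebra.mem_bot.mp hx
  have hinj : Function.Injective (algebraMap (𝓞 K ⧸ v.asIdeal) (𝓞 L ⧸ Q)) :=
    (algebraMap (𝓞 K ⧸ v.asIdeal) (𝓞 L ⧸ Q)).injective
  -- splitting of P over L
  have hsplits : Splits (P.map (algebraMap K L)) :=
    SplittingField.splits P
  have hιinj : Function.Injective (algebraMap (𝓞 L) L) := IsFractionRing.injective (𝓞 L) L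
  set g1 : Polynomial (𝓞 L) := g.map (algebraMap (𝓞 K) (𝓞 L)) with hg1def
  have hg1map : g1.map (algebraMap (𝓞 L) L) = P.map (algebraMap K L) := by
    rw [hg1def, Polynomial.map_map, ← IsScalarTower.algebraMap_eq,
      IsScalarTower.algebraMap_eq (𝓞 K) K L, ← Polynomial.map_map, hg]
  have hg1monic : g1.Monic := by
    apply Polynomial.monic_of_injective hιinj
    rw [hg1map]
    exact hPmonic.map _
  set s : Multiset L := (P.map (algebraMap K L)).roots with hsdef
  have hscard : Multiset.card s = d ^ N := by
    have h1 := hsplits.natDegree_eq_card_roots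
    rw [hsdef, ← h1, natDegree_map, hPdeg]
  -- integral roots
  have hall : ∀ r ∈ s, ∃ r' : 𝓞 L, algebraMap (𝓞 L) L r' = r := by
    intro r hr
    have hroot : IsIntegral (𝓞 L) r := by
      refine ⟨g1, hg1monic, ?_⟩
      have : (g1.map (algebraMap (𝓞 L) L)).IsRoot r := by
        rw [hg1map]; exact isRoot_of_mem_roots hr
      rwa [Polynomial.IsRoot, Polynomial.eval_map] at this
    exact IsIntegrallyClosed.isIntegral_iff.mp hroot
  set t : Multiset (𝓞 L) := s.pmap (fun r hr => Classical.choose hr) hall with htdef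
  have htmap : t.map (algebraMap (𝓞 L) L) = s := by
    rw [htdef, Multiset.map_pmap]
    calc s.pmap (fun r hr => algebraMap (𝓞 L) L (Classical.choose hr)) hall
        = s.pmap (fun r _ => r) hall := by
          apply Multiset.pmap_congr
          intro r hr _ _
          exact Classical.choose_spec (hall r hr)
      _ = s := by rw [Multiset.pmap_eq_map]; exact Multiset.map_id s
  have htcard : Multiset.card t = d ^ N := by
    rw [← hscard, ← htmap, Multiset.card_map]
  have hg1fact : g1 = (t.map fun a => X - C a).prod := by
    apply Polynomial.map_injective _ hιinj
    rw [hg1map, Polynomial.map_multiset_prod, Multiset.map_map]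
    have : ((fun p => p.map (algebraMap (𝓞 L) L)) ∘ fun a => X - C a)
        = (fun a => X - C a) ∘ (algebraMap (𝓞 L) L) := by
      funext a; simp [Polynomial.map_sub]
    rw [this, ← Multiset.map_map, htmap]
    exact hsplits.eq_prod_roots_of_monic (hPmonic.map _)
  -- reduction mod Q
  have hφcomp : (algebraMap (𝓞 K ⧸ v.asIdeal) (𝓞 L ⧸ Q)).comp (Ideal.Quotient.mk v.asIdeal)
      = (Ideal.Quotient.mk Q).comp (algebraMap (𝓞 K) (𝓞 L)) := rfl
  have hgbar : g1.map (Ideal.Quotient.mk Q)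
      = (g.map (Ideal.Quotient.mk v.asIdeal)).map (algebraMap (𝓞 K ⧸ v.asIdeal) (𝓞 L ⧸ Q)) := by
    rw [hg1def, Polynomial.map_map, Polynomial.map_map, hφcomp]
  have hbarsep : (g1.map (Ideal.Quotient.mk Q)).Separable := by
    rw [hgbar]; exact hgsep.map
  have hbarfact : g1.map (Ideal.Quotient.mk Q)
      = ((t.map (Ideal.Quotient.mk Q)).map fun a => X - C a).prod := by
    rw [hg1fact, Polynomial.map_multiset_prod, Multiset.map_map, Multiset.map_map]
    congr 1
    apply Multiset.map_congr rfl
    intro a _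
    simp [Polynomial.map_sub]
  have hroots : (g1.map (Ideal.Quotient.mk Q)).roots = t.map (Ideal.Quotient.mk Q) := by
    rw [hbarfact]
    exact roots_multiset_prod_X_sub_C _
  have hnodup : (t.map (Ideal.Quotient.mk Q)).Nodup := by
    rw [← hroots]
    exact nodup_roots hbarsep
  -- finish counting
  haveI : Finite (𝓞 K ⧸ v.asIdeal) := by
    have := Ideal.finiteQuotientOfFreeOfNeBot v.asIdeal v.ne_bot
    exact this
  haveI : Finite (𝓞 L ⧸ Q) := Finite.of_surjective _ hsurj
  letI : Fintype (𝓞 L ⧸ Q) := Fintype.ofFinite _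
  have hcount : d ^ N ≤ Nat.card (𝓞 L ⧸ Q) := by
    have h1 : (t.map (Ideal.Quotient.mk Q)).toFinset.card = d ^ N := by
      rw [Multiset.toFinset_card_of_nodup hnodup, Multiset.card_map, htcard]
    rw [Nat.card_eq_fintype_card, ← h1]
    exact Finset.card_le_univ _
  have hcards : Nat.card (𝓞 K ⧸ v.asIdeal) = Nat.card (𝓞 L ⧸ Q) :=
    Nat.card_eq_of_bijective _ ⟨hinj, hsurj⟩
  rw [hcards]
  exact hcount
end

section
/- Let $d \geq 2$ be an integer and let $F$ be a field whose characteristic does not divide $d$ (in particular characteristic $0$ is allowed). Let $c \in F$, set $f := x^d - c$, and suppose there is a positive integer $n_0$ such that $f^{n_0}(0) = 0$. Let $\alpha \in F$ with $\alpha \neq -c$. Then for each positive integer $N$, the splitting field $F_N(f,\alpha)$ of $f^N - \alpha$ over $F$ contains an element of multiplicative order equal to $d^{\max(\lfloor N/n_0 \rfloor - 1, 0) + 1}$. -/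
open Polynomial

section Aux
variable {F Ω : Type*} [Field F] [Field Ω]

lemma iter_eval (φ : F →+* Ω) (d : ℕ) (c : F) (j : ℕ) (x : Ω) :
    eval x ((polyIter (X ^ d - C c) j).map φ) = (fun y : Ω => y ^ d - φ c)^[j] x := by
  induction j generalizing x with
  | zero => simp [polyIter]
  | succ n ih =>
    rw [polyIter, Polynomial.map_comp, eval_comp, Function.iterate_succ_apply]
    rw [ih]
    congr 1
    simp

lemma iter_monic (d : ℕ) (c : F) (hd : d ≠ 0) (j : ℕ) : (polyIter (X ^ d - C c) j).Monic := by
  induction j with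
  | zero => simpa [polyIter] using monic_X
  | succ n ih =>
    rw [polyIter]
    exact ih.comp (monic_X_pow_sub_C c hd) (by simp [natDegree_X_pow_sub_C, hd])

lemma iter_natDegree (d : ℕ) (c : F) (hd : d ≠ 0) (j : ℕ) :
    (polyIter (X ^ d - C c) j).natDegree = d ^ j := by
  induction j with
  | zero => simp [polyIter]
  | succ n ih => rw [polyIter, natDegree_comp, ih, natDegree_X_pow_sub_C, pow_succ]

-- invariance of the iterate under multiplication by d-th root of unity
lemma inv_lemma {d : ℕ} {c' : Ω} {η : Ω} (hη : η ^ d = 1) {j : ℕ} (hj : 1 ≤ j) (x : Ω) :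
    (fun y : Ω => y ^ d - c')^[j] (η * x) = (fun y : Ω => y ^ d - c')^[j] x := by
  obtain ⟨k, rfl⟩ := Nat.exists_eq_add_of_le hj
  rw [add_comm, Function.iterate_succ_apply, Function.iterate_succ_apply]
  congr 1
  simp [mul_pow, hη]

-- surjectivity of iterates of y^d - c'
lemma iter_surj [IsAlgClosed Ω] {d : ℕ} (hd0 : d ≠ 0) (c' : Ω) (j : ℕ) :
    Function.Surjective ((fun y : Ω => y ^ d - c')^[j]) := by
  apply Function.Surjective.iterate
  intro y
  obtain ⟨z, hz⟩ := IsAlgClosed.exists_pow_nat_eq (y + c') (Nat.pos_of_ne_zero hd0)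
  exact ⟨z, by simp [hz]⟩

lemma hom_iter (φ : F →+* Ω) (d : ℕ) (c : F) (j : ℕ) (x : F) :
    φ ((fun y : F => y ^ d - c)^[j] x) = (fun y : Ω => y ^ d - φ c)^[j] (φ x) := by
  induction j generalizing x with
  | zero => simp
  | succ n ih =>
    rw [Function.iterate_succ_apply, Function.iterate_succ_apply, ih]
    congr 1
    simp


section Closed
variable [IsAlgClosed Ω]

lemma exists_nonzero_root (φ : F →+* Ω) {d : ℕ} (hd : 2 ≤ d) (hchar : (d : F) ≠ 0)
    (c α : F) (hα : α ≠ -c) {l : ℕ} (hl : 1 ≤ l) :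
    ∃ γ : Ω, (fun y : Ω => y ^ d - φ c)^[l] γ = φ α ∧ γ ≠ 0 := by
  have hd0 : d ≠ 0 := by omega
  set g : Ω → Ω := fun y : Ω => y ^ d - φ c with hg
  set q : Polynomial Ω := (polyIter (X ^ d - C c) l - C α).map φ with hq
  have hmono : (polyIter (X ^ d - C c) l - C α).Monic := by
    apply (iter_monic d c hd0 l).sub_of_left
    calc degree (C α) ≤ 0 := degree_C_le
    _ < (d ^ l : ℕ) := by exact_mod_cast WithBot.coe_pos.mpr (by positivity)
    _ = degree (polyIter (X ^ d - C c) l) := by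
        rw [degree_eq_natDegree (iter_monic d c hd0 l).ne_zero, iter_natDegree d c hd0 l]
  have hqm : q.Monic := hmono.map φ
  have hqdeg : q.natDegree = d ^ l := by
    rw [hq, hmono.natDegree_map, natDegree_sub_C, iter_natDegree d c hd0 l]
  have keyeval : ∀ x : Ω, eval x q = g^[l] x - φ α := by
    intro x
    rw [hq, Polynomial.map_sub, eval_sub, iter_eval, map_C, eval_C]
  have hq0 : q ≠ 0 := hqm.ne_zero
  have qsplits : q.Splits := IsAlgClosed.splits q
  have hcard : Multiset.card q.roots = d ^ l := by
    rw [splits_iff_card_roots.mp qsplits, hqdeg]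
  have hrootsne : q.roots ≠ 0 := by
    intro h0
    rw [h0, Multiset.card_zero] at hcard
    have : 0 < d ^ l := by positivity
    omega
  obtain ⟨γ₁, hγ₁⟩ := Multiset.exists_mem_of_ne_zero hrootsne
  have hαne : φ α ≠ φ (-c) := fun h => hα (φ.injective h)
  have hroot : ∀ a ∈ q.roots, g^[l] a = φ α := by
    intro a ha
    have h2 : eval a q = 0 := (mem_roots hq0).mp ha
    rw [keyeval] at h2
    linear_combination h2
  by_cases hcz : c = 0
  · refine ⟨γ₁, hroot γ₁ hγ₁, ?_⟩
    intro h0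
    have h2 := hroot γ₁ hγ₁
    rw [h0] at h2
    have hfix : g^[l] (0 : Ω) = 0 := by
      apply Function.iterate_fixed
      simp [hg, zero_pow hd0, hcz]
    rw [hfix] at h2
    apply hαne
    rw [hcz]
    simpa using h2.symm
  · -- c ≠ 0
    by_contra hcon
    push_neg at hcon
    have hallzero : ∀ a ∈ q.roots, a = 0 := fun a ha => hcon a (hroot a ha)
    have hqX : q = X ^ (d ^ l) := by
      have h6 := qsplits.eq_prod_roots_of_monic hqm
      have hmapc : Multiset.map (fun a => X - C a) q.roots
          = Multiset.map (fun _ => (X : Polynomial Ω)) q.roots :=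
        Multiset.map_congr rfl (fun a ha => by rw [hallzero a ha, map_zero, sub_zero])
      rw [hmapc, Multiset.map_const', Multiset.prod_replicate, hcard] at h6
      exact h6
    have R : ∀ x : Ω, g^[l] x = x ^ (d ^ l) + φ α := by
      intro x
      have := keyeval x
      rw [hqX] at this
      simp only [eval_pow, eval_X] at this
      linear_combination -this
    obtain ⟨k, rfl⟩ : ∃ k, l = k + 1 := ⟨l - 1, by omega⟩
    rcases Nat.eq_zero_or_pos k with hk | hk
    · subst hk
      have h5 := R 0
      rw [Function.iterate_one] at h5
      simp only [hg] at h5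
      rw [zero_pow hd0, zero_pow (by positivity : d ^ (0+1) ≠ 0), zero_sub, zero_add] at h5
      exact hαne (by rw [map_neg]; linear_combination -h5)
    · have R' : ∀ u : Ω, g^[k] u = (u + φ c) ^ (d ^ k) + φ α := by
        intro u
        obtain ⟨x, hx⟩ := IsAlgClosed.exists_pow_nat_eq (u + φ c) (Nat.pos_of_ne_zero hd0)
        have h1 : g^[k + 1] x = g^[k] u := by
          rw [Function.iterate_succ_apply]
          congr 1
          simp only [hg]
          rw [hx]; ring
        have h2 := R x
        rw [h1] at h2
        rw [h2, pow_succ', pow_mul, hx]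
      haveI : NeZero ((d : ℕ) : Ω) := ⟨by
        rw [← map_natCast φ]
        exact fun h => hchar (φ.injective (by simpa using h))⟩
      obtain ⟨ζ, hζ⟩ := HasEnoughRootsOfUnity.exists_primitiveRoot Ω d
      have hζd : ζ ^ d = 1 := hζ.pow_eq_one
      have hζ1 : ζ ≠ 1 := by
        intro h
        rw [h] at hζ
        have := hζ.eq_orderOf
        simp at this
        omega
      have hζ0 : ζ ≠ 0 := fun h => by simp [h, zero_pow hd0] at hζd
      set u₀ : Ω := -(φ c * ζ⁻¹) with hu₀
      have key1 : ζ * u₀ + φ c = 0 := by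
        rw [hu₀]
        field_simp
        ring
      have key2 : g^[k] (ζ * u₀) = g^[k] u₀ := inv_lemma hζd hk u₀
      have e1 := R' (ζ * u₀)
      have e2 := R' u₀
      rw [key2, e2, key1, zero_pow (by positivity : d ^ k ≠ 0)] at e1
      have : (u₀ + φ c) ^ (d ^ k) = 0 := by linear_combination e1
      have h3 : u₀ + φ c = 0 := pow_eq_zero_iff (by positivity : d ^ k ≠ 0) |>.mp this
      apply hζ1
      have hc' : φ c ≠ 0 := fun h => hcz (φ.injective (by simpa using h))
      have : φ c * ζ⁻¹ = φ c := by rw [hu₀] at h3; linear_combination -h3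
      have h4 : ζ⁻¹ = 1 := by
        have h5 : φ c * ζ⁻¹ = φ c * 1 := by rw [mul_one]; exact this
        exact mul_left_cancel₀ hc' h5
      rw [← inv_inv ζ, h4, inv_one]

lemma lift_one (φ : F →+* Ω) {d : ℕ} (hd : 2 ≤ d) (c : F) {n₀ : ℕ} (hn₀ : 1 ≤ n₀)
    (hper : (fun y : Ω => y ^ d - φ c)^[n₀] 0 = 0)
    {γ : Ω} (hγ : γ ≠ 0) :
    ∃ L : List Ω, L.length = d ^ (n₀ - 1) ∧
      (∀ β ∈ L, (fun y : Ω => y ^ d - φ c)^[n₀] β = γ ∧ β ≠ 0) ∧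
      (-1 : Ω) ^ (d ^ (n₀ - 1) + 1) * L.prod ^ d = γ := by
  have hd0 : d ≠ 0 := by omega
  set g : Ω → Ω := fun y : Ω => y ^ d - φ c with hg
  obtain ⟨k, rfl⟩ : ∃ k, n₀ = k + 1 := ⟨n₀ - 1, by omega⟩
  simp only [Nat.add_sub_cancel]
  set M := d ^ k with hM
  set P' : Polynomial Ω := ((polyIter (X ^ d - C c) k).map φ).comp (X - C (φ c)) with hP'
  have hP'm : P'.Monic :=
    ((iter_monic d c hd0 k).map φ).comp (monic_X_sub_C (φ c)) (by simp)
  have hP'deg : P'.natDegree = M := by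
    rw [hP', natDegree_comp, (iter_monic d c hd0 k).natDegree_map,
      iter_natDegree d c hd0 k, natDegree_X_sub_C, mul_one]
  set W : Polynomial Ω := P' - C γ with hW
  have hWm : W.Monic := by
    apply hP'm.sub_of_left
    calc degree (C γ) ≤ 0 := degree_C_le
    _ < (M : ℕ) := by exact_mod_cast WithBot.coe_pos.mpr (by positivity)
    _ = degree P' := by rw [degree_eq_natDegree hP'm.ne_zero, hP'deg]
  have hWdeg : W.natDegree = M := by rw [hW, natDegree_sub_C, hP'deg]
  have keyeval : ∀ x : Ω, eval x W = g^[k] (x - φ c) - γ := by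
    intro x
    rw [hW, eval_sub, eval_C, hP', eval_comp, eval_sub, eval_X, eval_C, iter_eval]
  have hg0 : g 0 = -φ c := by simp [hg, zero_pow hd0]
  have heval0 : eval 0 W = -γ := by
    rw [keyeval, zero_sub, ← hg0, ← Function.iterate_succ_apply, hper, zero_sub]
  have hsplit : W.Splits := IsAlgClosed.splits W
  have hcard : Multiset.card W.roots = M := by rw [splits_iff_card_roots.mp hsplit, hWdeg]
  have hprod : W.roots.prod = (-1 : Ω) ^ (M + 1) * γ := by
    have h1 := hsplit.coeff_zero_eq_prod_roots_of_monic hWm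
    rw [coeff_zero_eq_eval_zero, heval0, hWdeg] at h1
    have h2 : ((-1 : Ω) ^ M) * ((-1 : Ω) ^ M) = 1 := by
      rw [← pow_add]
      exact Even.neg_one_pow ⟨M, by ring⟩
    calc W.roots.prod = ((-1 : Ω) ^ M * (-1 : Ω) ^ M) * W.roots.prod := by rw [h2, one_mul]
    _ = (-1 : Ω) ^ M * (-γ) := by rw [mul_assoc, ← h1]
    _ = (-1 : Ω) ^ (M + 1) * γ := by ring
  have hrootprop : ∀ a ∈ W.roots, g^[k] (a - φ c) = γ ∧ a ≠ 0 := by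
    intro a ha
    have h2 : eval a W = 0 := (mem_roots hWm.ne_zero).mp ha
    rw [keyeval] at h2
    constructor
    · linear_combination h2
    · intro h0
      rw [h0, zero_sub] at h2
      have hiter0 : g^[k] (-φ c) = 0 := by
        rw [← hg0, ← Function.iterate_succ_apply]; exact hper
      rw [hiter0, zero_sub, neg_eq_zero] at h2
      exact hγ h2
  -- choose d-th roots
  have dpos : 0 < d := by omega
  set r : Ω → Ω := fun δ => Classical.choose (IsAlgClosed.exists_pow_nat_eq δ dpos) with hr
  have hrspec : ∀ δ : Ω, (r δ) ^ d = δ := fun δ =>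
    Classical.choose_spec (IsAlgClosed.exists_pow_nat_eq δ dpos)
  refine ⟨W.roots.toList.map r, ?_, ?_, ?_⟩
  · rw [List.length_map, Multiset.length_toList, hcard]
  · intro β hβ
    obtain ⟨δ, hδmem, rfl⟩ := List.mem_map.mp hβ
    have hδ : δ ∈ W.roots := (Multiset.mem_toList).mp hδmem
    obtain ⟨hδroot, hδne⟩ := hrootprop δ hδ
    constructor
    · rw [Function.iterate_succ_apply]
      have : g (r δ) = δ - φ c := by simp only [hg]; rw [hrspec]
      rw [this, hδroot]
    · intro h0
      apply hδne
      rw [← hrspec δ, h0, zero_pow hd0]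
  · have h1 : (W.roots.toList.map r).prod ^ d = ((W.roots.toList.map r).map (· ^ d)).prod := by
      have := map_list_prod (powMonoidHom d : Ω →* Ω) (W.roots.toList.map r)
      simpa [powMonoidHom] using this
    have h2 : (W.roots.toList.map r).map (· ^ d) = W.roots.toList := by
      rw [List.map_map]
      have : ((· ^ d) ∘ r) = (id : Ω → Ω) := by
        funext δ
        simp [Function.comp, hrspec δ]
      rw [this, List.map_id]
    rw [h1, h2, Multiset.prod_toList, hprod]
    have h3 : ((-1 : Ω) ^ (M + 1)) * ((-1 : Ω) ^ (M + 1)) = 1 := by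
      rw [← pow_add]
      exact Even.neg_one_pow ⟨M + 1, by ring⟩
    calc (-1 : Ω) ^ (M + 1) * ((-1 : Ω) ^ (M + 1) * γ)
        = ((-1 : Ω) ^ (M + 1) * (-1 : Ω) ^ (M + 1)) * γ := by ring
    _ = γ := by rw [h3, one_mul]

lemma lift_list (φ : F →+* Ω) {d : ℕ} (hd : 2 ≤ d) (c α : F) {n₀ : ℕ} (hn₀ : 1 ≤ n₀)
    (hper : (fun y : Ω => y ^ d - φ c)^[n₀] 0 = 0) (lvl : ℕ) :
    ∀ as : List Ω, (∀ x ∈ as, (fun y : Ω => y ^ d - φ c)^[lvl] x = φ α ∧ x ≠ 0) →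
    ∃ AS : List Ω, AS.length = d ^ (n₀ - 1) * as.length ∧
      (∀ β ∈ AS, (fun y : Ω => y ^ d - φ c)^[lvl + n₀] β = φ α ∧ β ≠ 0) ∧
      ((-1 : Ω) ^ (d ^ (n₀ - 1) + 1)) ^ as.length * AS.prod ^ d = as.prod := by
  intro as
  induction as with
  | nil =>
    intro _
    exact ⟨[], by simp, by simp, by simp [one_pow]⟩
  | cons x as ih =>
    intro hprops
    obtain ⟨hx, hxne⟩ := hprops x List.mem_cons_self
    obtain ⟨AS, hASlen, hASmem, hASprod⟩ := ih (fun y hy => hprops y (List.mem_cons_of_mem x hy))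
    obtain ⟨L, hLlen, hLmem, hLprod⟩ := lift_one φ hd c hn₀ hper hxne
    refine ⟨L ++ AS, ?_, ?_, ?_⟩
    · rw [List.length_append, hLlen, hASlen, List.length_cons]; ring
    · intro β hβ
      rcases List.mem_append.mp hβ with h | h
      · obtain ⟨hβroot, hβne⟩ := hLmem β h
        refine ⟨?_, hβne⟩
        rw [Function.iterate_add_apply, hβroot, hx]
      · exact hASmem β h
    · rw [List.prod_append, List.length_cons, List.prod_cons]
      calc ((-1 : Ω) ^ (d ^ (n₀ - 1) + 1)) ^ (as.length + 1) * (L.prod * AS.prod) ^ d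
          = ((-1 : Ω) ^ (d ^ (n₀ - 1) + 1) * L.prod ^ d) *
            (((-1 : Ω) ^ (d ^ (n₀ - 1) + 1)) ^ as.length * AS.prod ^ d) := by
            rw [mul_pow]; ring
      _ = x * as.prod := by rw [hLprod, hASprod]

lemma main_H (φ : F →+* Ω) {d : ℕ} (hd : 2 ≤ d) (hchar : (d : F) ≠ 0) (c α : F)
    (hα : α ≠ -c) {n₀ : ℕ} (hn₀ : 1 ≤ n₀)
    (hper : (fun y : Ω => y ^ d - φ c)^[n₀] 0 = 0) :
    ∀ (i j : ℕ), 1 ≤ j → ∀ ζ : Ω, ζ ^ (d ^ (i + 1)) = 1 →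
    ∃ as bs : List Ω, as.length = bs.length ∧
      (∀ x ∈ as, (fun y : Ω => y ^ d - φ c)^[j + i * n₀] x = φ α ∧ x ≠ 0) ∧
      (∀ x ∈ bs, (fun y : Ω => y ^ d - φ c)^[j + i * n₀] x = φ α ∧ x ≠ 0) ∧
      ζ * bs.prod = as.prod := by
  have hd0 : d ≠ 0 := by omega
  intro i
  induction i with
  | zero =>
    intro j hj ζ hζ
    rw [zero_add, pow_one] at hζ
    obtain ⟨γ, hγroot, hγne⟩ := exists_nonzero_root φ hd hchar c α hα hj
    have hζne : ζ ≠ 0 := fun h => by simp [h, zero_pow hd0] at hζ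
    refine ⟨[ζ * γ], [γ], by simp, ?_, ?_, by simp [mul_comm]⟩
    · intro x hx
      rw [List.mem_singleton] at hx
      subst hx
      rw [Nat.zero_mul, Nat.add_zero]
      exact ⟨by rw [inv_lemma hζ hj γ]; exact hγroot, mul_ne_zero hζne hγne⟩
    · intro x hx
      rw [List.mem_singleton] at hx
      subst hx
      rw [Nat.zero_mul, Nat.add_zero]
      exact ⟨hγroot, hγne⟩
  | succ i ih =>
    intro j hj ζ hζ
    have hζd : (ζ ^ d) ^ (d ^ (i + 1)) = 1 := by
      rw [← pow_mul, ← pow_succ']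
      exact hζ
    obtain ⟨as, bs, hlen, has, hbs, hprod⟩ := ih j hj (ζ ^ d) hζd
    set L := j + i * n₀ with hL
    obtain ⟨AS, hASlen, hASmem, hASprod⟩ := lift_list φ hd c α hn₀ hper L as has
    obtain ⟨BS, hBSlen, hBSmem, hBSprod⟩ := lift_list φ hd c α hn₀ hper L bs hbs
    have hASne : AS.prod ≠ 0 := List.prod_ne_zero (fun h => (hASmem 0 h).2 rfl)
    have hBSne : BS.prod ≠ 0 := List.prod_ne_zero (fun h => (hBSmem 0 h).2 rfl)
    have hεne : ((-1 : Ω) ^ (d ^ (n₀ - 1) + 1)) ^ as.length ≠ 0 :=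
      pow_ne_zero _ (pow_ne_zero _ (neg_ne_zero.mpr one_ne_zero))
    have hcancel : ζ ^ d * BS.prod ^ d = AS.prod ^ d := by
      apply mul_left_cancel₀ hεne
      calc ((-1 : Ω) ^ (d ^ (n₀ - 1) + 1)) ^ as.length * (ζ ^ d * BS.prod ^ d)
          = ζ ^ d * (((-1 : Ω) ^ (d ^ (n₀ - 1) + 1)) ^ bs.length * BS.prod ^ d) := by
            rw [hlen]; ring
      _ = ζ ^ d * bs.prod := by rw [hBSprod]
      _ = as.prod := hprod
      _ = ((-1 : Ω) ^ (d ^ (n₀ - 1) + 1)) ^ as.length * AS.prod ^ d := hASprod.symm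
    set η := ζ * BS.prod * AS.prod⁻¹ with hη
    have hζne : ζ ≠ 0 := by
      intro h
      rw [h, zero_pow (by positivity : d ^ (i + 1 + 1) ≠ 0)] at hζ
      exact zero_ne_one hζ
    have hηd : η ^ d = 1 := by
      have h1 : η ^ d = (ζ ^ d * BS.prod ^ d) * (AS.prod ^ d)⁻¹ := by
        rw [hη, mul_pow, mul_pow, inv_pow, mul_assoc]
      rw [h1, hcancel, mul_inv_cancel₀ (pow_ne_zero _ hASne)]
    have hηne : η ≠ 0 := fun h => by simp [h, zero_pow hd0] at hηd
    obtain ⟨γ₀, hγ₀root, hγ₀ne⟩ :=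
      exists_nonzero_root φ hd hchar c α hα (l := L + n₀) (by omega)
    have harith : j + (i + 1) * n₀ = L + n₀ := by rw [hL]; ring
    refine ⟨(η * γ₀) :: AS, γ₀ :: BS, ?_, ?_, ?_, ?_⟩
    · simp only [List.length_cons, hASlen, hBSlen, hlen]
    · intro x hx
      rcases List.mem_cons.mp hx with h | h
      · subst h
        rw [harith]
        exact ⟨by rw [inv_lemma hηd (by omega) γ₀]; exact hγ₀root, mul_ne_zero hηne hγ₀ne⟩
      · rw [harith]; exact hASmem x h
    · intro x hx
      rcases List.mem_cons.mp hx with h | h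
      · subst h
        rw [harith]
        exact ⟨hγ₀root, hγ₀ne⟩
      · rw [harith]; exact hBSmem x h
    · rw [List.prod_cons, List.prod_cons, hη]
      field_simp

end Closed
end Aux

theorem stmt6 (d : ℕ) (hd : 2 ≤ d) (F : Type*) [Field F] (hchar : (d : F) ≠ 0)
    (c : F) (n₀ : ℕ) (hn₀ : 1 ≤ n₀)
    (hper : (fun x : F => x ^ d - c)^[n₀] 0 = 0)
    (α : F) (hα : α ≠ -c) :
    ∀ N : ℕ, 1 ≤ N →
      ∃ x : (polyIter (X ^ d - Polynomial.C c) N - Polynomial.C α).SplittingField,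
        orderOf x = d ^ (max (N / n₀ - 1) 0 + 1) := by
  intro N hN
  have hd0 : d ≠ 0 := by omega
  set p₀ : Polynomial F := polyIter (X ^ d - C c) N - C α with hp₀
  set K := p₀.SplittingField with hK
  set Ω := AlgebraicClosure K with hΩ
  set ι : K →+* Ω := algebraMap K Ω with hι
  set φ : F →+* Ω := ι.comp (algebraMap F K) with hφ
  have hperΩ : (fun y : Ω => y ^ d - φ c)^[n₀] 0 = 0 := by
    have h0 := hom_iter φ d c n₀ 0
    rw [hper] at h0
    simpa using h0.symm
  -- arithmetic
  set m' : ℕ := N / n₀ - 1 with hm'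
  have hdiv : N / n₀ * n₀ ≤ N := Nat.div_mul_le_self N n₀
  have harith : m' * n₀ + 1 ≤ N := by
    rcases Nat.eq_zero_or_pos (N / n₀) with h | h
    · simp [hm', h]; omega
    · have : m' + 1 = N / n₀ := by omega
      nlinarith [hdiv, hn₀]
  obtain ⟨j, hj1, hjN⟩ : ∃ j, 1 ≤ j ∧ j + m' * n₀ = N :=
    ⟨N - m' * n₀, by omega, by omega⟩
  -- primitive root of unity in Ω
  have hdΩ : ((d : ℕ) : Ω) ≠ 0 := by
    rw [← map_natCast φ]
    exact fun h => hchar (φ.injective (by simpa using h))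
  haveI : NeZero ((d ^ (m' + 1) : ℕ) : Ω) := ⟨by push_cast; exact pow_ne_zero _ hdΩ⟩
  obtain ⟨ζ, hζ⟩ := HasEnoughRootsOfUnity.exists_primitiveRoot Ω (d ^ (m' + 1))
  have hζpow : ζ ^ d ^ (m' + 1) = 1 := hζ.pow_eq_one
  obtain ⟨as, bs, hlen, has, hbs, hprod⟩ :=
    main_H φ hd hchar c α hα hn₀ hperΩ m' j hj1 ζ hζpow
  simp only [hjN] at has hbs
  -- roots of level N are in the range of ι
  have hmem : ∀ x : Ω, (fun y : Ω => y ^ d - φ c)^[N] x = φ α → x ∈ ι.fieldRange := by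
    intro x hx
    have hevalx : eval x (p₀.map φ) = 0 := by
      show eval x (((polyIter (X ^ d - C c) N - C α)).map φ) = 0
      rw [Polynomial.map_sub, eval_sub, iter_eval, map_C, eval_C, hx, sub_self]
    have hmono : p₀.Monic := by
      show (polyIter (X ^ d - C c) N - C α).Monic
      apply (iter_monic d c hd0 N).sub_of_left
      calc degree (C α) ≤ 0 := degree_C_le
      _ < (d ^ N : ℕ) := by exact_mod_cast WithBot.coe_pos.mpr (by positivity)
      _ = degree (polyIter (X ^ d - C c) N) := by
          rw [degree_eq_natDegree (iter_monic d c hd0 N).ne_zero, iter_natDegree d c hd0 N]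
    set pK : Polynomial K := p₀.map (algebraMap F K) with hpK
    have hKsplit : pK.Splits :=
      SplittingField.splits p₀
    have hpKm : pK.Monic := hmono.map _
    have hfact := hKsplit.eq_prod_roots_of_monic hpKm
    have hmapped : p₀.map φ = (pK.roots.map (fun a => X - C (ι a))).prod := by
      have h1 : p₀.map φ = pK.map ι := by rw [hφ, ← Polynomial.map_map, hpK]
      rw [h1]
      conv_lhs => rw [hfact]
      rw [Polynomial.map_multiset_prod, Multiset.map_map]
      congr 1
      apply Multiset.map_congr rfl
      intro a _
      simp
    rw [hmapped, eval_multiset_prod, Multiset.map_map, Multiset.prod_eq_zero_iff] at hevalx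
    obtain ⟨a, _, hax⟩ := Multiset.mem_map.mp hevalx
    simp only [Function.comp_apply, eval_sub, eval_X, eval_C] at hax
    rw [RingHom.mem_fieldRange]
    exact ⟨a, by linear_combination -hax⟩
  have hasmem : as.prod ∈ ι.fieldRange :=
    list_prod_mem (fun x hx => hmem x (has x hx).1)
  have hbsmem : bs.prod ∈ ι.fieldRange :=
    list_prod_mem (fun x hx => hmem x (hbs x hx).1)
  have hbsne : bs.prod ≠ 0 := List.prod_ne_zero (fun h => (hbs 0 h).2 rfl)
  have hζval : ζ = as.prod * bs.prod⁻¹ := by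
    rw [eq_mul_inv_iff_mul_eq₀ hbsne]
    exact hprod
  have hζmem : ζ ∈ ι.fieldRange := by
    rw [hζval]
    exact mul_mem hasmem (inv_mem hbsmem)
  obtain ⟨z, hz⟩ := RingHom.mem_fieldRange.mp hζmem
  refine ⟨z, ?_⟩
  have horder : orderOf (ι z) = orderOf z := orderOf_injective ι.toMonoidHom ι.injective z
  rw [hz] at horder
  have hordζ : orderOf ζ = d ^ (m' + 1) := hζ.eq_orderOf.symm
  have hmax : max (N / n₀ - 1) 0 = m' := by omega
  rw [hmax, ← horder, hordζ]
end

section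
/- Let $d \geq 2$ be an integer, let $F$ be a field whose characteristic does not divide $d$, let $c \in F$, set $f := x^d - c$, and suppose there is a positive integer $n_0$ such that $f^{n_0}(0) = 0$. Let $\beta$ be an element of $F$. Then in an algebraic closure $\bar{F}$ of $F$ there exist elements $\gamma_1, \ldots, \gamma_{d^{n_0 - 1}}$ such that $f^{n_0}(\gamma_j) = \beta$ for each $j$, the polynomial factorization $f^{n_0} - \beta = \prod_{j=1}^{d^{n_0-1}} (x^d - \gamma_j^d)$ holds in $\bar{F}[x]$, and consequently $-\beta = (-1)^{d^{n_0 - 1}} \cdot (\gamma_1 \cdots \gamma_{d^{n_0-1}})^d$. -/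
open Polynomial

lemma polyIter_map {K L : Type*} [CommRing K] [CommRing L] (φ : K →+* L) (f : Polynomial K) :
    ∀ n, (polyIter f n).map φ = polyIter (f.map φ) n
  | 0 => by simp [polyIter]
  | n + 1 => by simp [polyIter, Polynomial.map_comp, polyIter_map φ f n]

lemma polyIter_eval {K : Type*} [CommRing K] (f : Polynomial K) (n : ℕ) (x : K) :
    (polyIter f n).eval x = (fun y => f.eval y)^[n] x := by
  induction n generalizing x with
  | zero => simp [polyIter]
  | succ n ih => simp [polyIter, eval_comp, ih, Function.iterate_succ_apply]

lemma polyIter_monic {K : Type*} [CommRing K] [Nontrivial K] {f : Polynomial K} (hf : f.Monic)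
    (hdeg : f.natDegree ≠ 0) (n : ℕ) [NoZeroDivisors K] :
    (polyIter f n).Monic ∧ (polyIter f n).natDegree = f.natDegree ^ n := by
  induction n with
  | zero => simpa [polyIter] using monic_X
  | succ n ih =>
    refine ⟨ih.1.comp hf hdeg, ?_⟩
    show ((polyIter f n).comp f).natDegree = _
    rw [natDegree_comp, ih.2, pow_succ]

lemma multiset_eq_ofFn {M : Type*} (s : Multiset M) {n : ℕ} (h : Multiset.card s = n) :
    ∃ r : Fin n → M, s = (List.ofFn r : Multiset M) := by
  subst h
  have hl : s.toList.length = Multiset.card s := Multiset.length_toList s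
  refine ⟨fun j => s.toList.get (Fin.cast hl.symm j), ?_⟩
  conv_lhs => rw [← Multiset.coe_toList s]
  congr 1
  apply List.ext_get (by simp [hl])
  intro i h1 h2
  simp [List.get_ofFn]

theorem stmt7 (d : ℕ) (hd : 2 ≤ d) (F : Type*) [Field F] (hchar : (d : F) ≠ 0)
    (c : F) (n₀ : ℕ) (hn₀ : 1 ≤ n₀)
    (hper : (fun x : F => x ^ d - c)^[n₀] 0 = 0)
    (β : F) :
    ∃ γ : Fin (d ^ (n₀ - 1)) → AlgebraicClosure F,
      (∀ j, Polynomial.aeval (γ j) (polyIter (X ^ d - Polynomial.C c) n₀) =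
        algebraMap F (AlgebraicClosure F) β) ∧
      (polyIter (X ^ d - Polynomial.C c) n₀ - Polynomial.C β).map
          (algebraMap F (AlgebraicClosure F)) =
        ∏ j : Fin (d ^ (n₀ - 1)), (X ^ d - Polynomial.C ((γ j) ^ d)) ∧
      algebraMap F (AlgebraicClosure F) (-β) =
        (-1 : AlgebraicClosure F) ^ (d ^ (n₀ - 1)) * (∏ j : Fin (d ^ (n₀ - 1)), γ j) ^ d := by
  classical
  set K := AlgebraicClosure F
  set φ := algebraMap F K with hφ
  set a : K := φ c with ha
  set fK : Polynomial K := X ^ d - C a with hfK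
  have hd0 : d ≠ 0 := by omega
  have hfKm : fK.Monic := monic_X_pow_sub_C a hd0
  have hfKdeg : fK.natDegree = d := natDegree_X_pow_sub_C
  have hmap : (X ^ d - C c : Polynomial F).map φ = fK := by
    simp [hfK, Polynomial.map_sub, Polynomial.map_pow, ha]
  set m := n₀ - 1 with hm
  have hn : n₀ = m + 1 := by omega
  set g : Polynomial K := polyIter fK m with hg
  have hgm := polyIter_monic hfKm (by rw [hfKdeg]; exact hd0) m
  set p : Polynomial K := g - C (φ β) with hp
  have hpdeg : p.natDegree = d ^ m := by rw [hp, natDegree_sub_C, hgm.2, hfKdeg]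
  have hpm : p.Monic := by
    refine hgm.1.sub_of_left ?_
    apply lt_of_le_of_lt degree_C_le
    rw [degree_eq_natDegree hgm.1.ne_zero, hgm.2, hfKdeg]
    exact_mod_cast Nat.pos_of_ne_zero (pow_ne_zero m hd0)
  have hsplits : Splits p := IsAlgClosed.splits p
  have hcard : Multiset.card p.roots = d ^ m := by
    rw [splits_iff_card_roots.mp hsplits, hpdeg]
  obtain ⟨r, hr⟩ := multiset_eq_ofFn p.roots hcard
  have hprod : p = ∏ j : Fin (d ^ m), (X - C (r j)) := by
    rw [hsplits.eq_prod_roots_of_monic hpm, hr]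
    simp [Multiset.map_coe, List.map_ofFn, Function.comp_def, List.prod_ofFn]
  have hroot : ∀ j, g.eval (r j) = φ β := by
    intro j
    have hmem : r j ∈ p.roots := by
      rw [hr]; exact Multiset.mem_coe.mpr ((List.mem_ofFn (f := r)).mpr ⟨j, rfl⟩)
    have h2 := isRoot_of_mem_roots hmem
    rw [hp] at h2
    simpa [IsRoot, sub_eq_zero] using h2
  choose γ hγ using fun j : Fin (d ^ m) => IsAlgClosed.exists_pow_nat_eq (k := K) (a + r j)
    (Nat.pos_of_ne_zero hd0)
  have key : (polyIter (X ^ d - C c : Polynomial F) n₀ - C β).map φ =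
      ∏ j : Fin (d ^ m), (X ^ d - C ((γ j) ^ d)) := by
    rw [hn, Polynomial.map_sub, polyIter_map, hmap, Polynomial.map_C]
    have h1 : polyIter fK (m + 1) - C (φ β) = p.comp fK := by
      rw [hp, sub_comp, C_comp]; rfl
    rw [h1, hprod, prod_comp]
    refine Finset.prod_congr rfl fun j _ => ?_
    rw [sub_comp, X_comp, C_comp, hfK, sub_sub, ← C_add,
      show a + r j = (γ j) ^ d from (hγ j).symm]
  refine ⟨γ, ?_, key, ?_⟩
  · intro j
    rw [aeval_def, ← eval_map, polyIter_map, hmap, hn]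
    show ((polyIter fK m).comp fK).eval (γ j) = φ β
    rw [eval_comp]
    have h2 : fK.eval (γ j) = r j := by rw [hfK]; simp [hγ j]
    rw [h2, ← hg, hroot]
  · have h3 := congrArg (Polynomial.eval (0 : K)) key
    rw [eval_map, eval₂_at_zero, ← coeff_zero_eq_eval_zero] at h3
    have hl : (polyIter (X ^ d - C c : Polynomial F) n₀ - C β).coeff 0 = -β := by
      rw [coeff_zero_eq_eval_zero, eval_sub, eval_C, polyIter_eval]
      have h4 : (fun y : F => (X ^ d - C c : Polynomial F).eval y) = fun x : F => x ^ d - c := by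
        funext y; simp
      rw [h4, hper, zero_sub]
    rw [hl] at h3
    rw [h3, coeff_zero_eq_eval_zero, eval_prod]
    calc ∏ j : Fin (d ^ m), (X ^ d - C ((γ j) ^ d) : Polynomial K).eval 0
        = ∏ j : Fin (d ^ m), (-1 : K) * (γ j) ^ d := by
          refine Finset.prod_congr rfl fun j _ => ?_
          simp [zero_pow hd0, neg_one_mul]
      _ = (-1 : K) ^ (d ^ m) * (∏ j : Fin (d ^ m), γ j) ^ d := by
          rw [Finset.prod_mul_distrib, Finset.prod_const, Finset.prod_pow,
            Finset.card_univ, Fintype.card_fin]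
end

section
/- Let $d \geq 2$ be an integer and let $\mathbb{F}$ be a finite field whose cardinality is coprime to $d$. Then there exists a real constant $C > 0$, depending only on $d$ and $\mathbb{F}$, such that the following holds: for every finite field extension $\mathbb{L}/\mathbb{F}$ and every integer $s \geq 1$, if $\mathbb{L}$ contains an element of multiplicative order equal to $d^s$, then $[\mathbb{L} : \mathbb{F}] \geq C \cdot d^s$. -/
open Module

private lemma padic_mono {p a b : ℕ} [Fact p.Prime] (hab : a ∣ b) (hb : b ≠ 0) :
    padicValNat p a ≤ padicValNat p b :=
  (padicValNat_dvd_iff_le hb).mp (dvd_trans pow_padicValNat_dvd hab)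

private lemma keyP (p q : ℕ) (hp : p.Prime) (hq : 2 ≤ q) (hpq : ¬ p ∣ q) :
    ∃ c : ℕ, ∀ n : ℕ, n ≠ 0 → padicValNat p (q ^ n - 1) ≤ c + padicValNat p n := by
  haveI : Fact p.Prime := ⟨hp⟩
  rcases hp.eq_two_or_odd' with rfl | hodd
  · refine ⟨padicValNat 2 (q ^ 2 - 1), fun n hn => ?_⟩
    have hq1 : (1:ℕ) < q := hq
    have h21 : 2 ∣ q - 1 := by omega
    have hA := padicValNat.pow_two_sub_pow (x := q) (y := 1) hq1 (by simpa using h21) hpq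
      (n := 2 * n) (by omega) ⟨n, by ring⟩
    have hB := padicValNat.pow_two_sub_pow (x := q) (y := 1) hq1 (by simpa using h21) hpq
      (n := 2) (by omega) ⟨1, by ring⟩
    simp only [one_pow] at hA hB
    have h2n : padicValNat 2 (2 * n) = 1 + padicValNat 2 n := by
      rw [padicValNat.mul two_ne_zero hn, padicValNat.self (by norm_num)]
    have h22 : padicValNat 2 2 = 1 := padicValNat.self (by norm_num)
    have hmono : padicValNat 2 (q ^ n - 1) ≤ padicValNat 2 (q ^ (2 * n) - 1) := by
      refine padic_mono ?_ ?_
      · have := Nat.sub_dvd_pow_sub_pow (q ^ n) 1 2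
        simpa [← pow_mul, mul_comm] using this
      · have : 1 < q ^ (2 * n) := Nat.one_lt_pow (by omega) hq
        omega
    omega
  · set m := orderOf (q : ZMod p) with hmdef
    refine ⟨padicValNat p (q ^ m - 1), fun n hn => ?_⟩
    by_cases h : p ∣ q ^ n - 1
    · have hq0 : 0 < q := by omega
      have hqn1 : 1 ≤ q ^ n := Nat.one_le_pow _ _ hq0
      have hcast : (q : ZMod p) ^ n = 1 := by
        have h0 : ((q ^ n - 1 : ℕ) : ZMod p) = 0 := (ZMod.natCast_eq_zero_iff _ _).mpr h
        rw [Nat.cast_sub hqn1] at h0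
        push_cast at h0
        linear_combination h0
      have hm : m ∣ n := orderOf_dvd_of_pow_eq_one hcast
      have hm0 : m ≠ 0 := by rintro h0; rw [h0] at hm; exact hn (Nat.eq_zero_of_zero_dvd hm)
      obtain ⟨k, rfl⟩ := hm
      have hk0 : k ≠ 0 := by rintro rfl; simp at hn
      have hpm : p ∣ q ^ m - 1 := by
        have h1 : (q : ZMod p) ^ m = 1 := pow_orderOf_eq_one _
        have hqm1 : 1 ≤ q ^ m := Nat.one_le_pow _ _ hq0
        have h0 : ((q ^ m - 1 : ℕ) : ZMod p) = 0 := by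
          rw [Nat.cast_sub hqm1]; push_cast; linear_combination h1
        exact (ZMod.natCast_eq_zero_iff _ _).mp h0
      have h1qm : (1:ℕ) < q ^ m := Nat.one_lt_pow hm0 hq
      have hnotdvd : ¬ p ∣ q ^ m := fun hdvd => hpq (hp.dvd_of_dvd_pow hdvd)
      have hLTE := padicValNat.pow_sub_pow (p := p) hodd (x := q ^ m) (y := 1) h1qm
        (by simpa using hpm) hnotdvd (n := k) hk0
      rw [one_pow, ← pow_mul] at hLTE
      rw [hLTE]
      have hle : padicValNat p k ≤ padicValNat p (m * k) :=
        padic_mono (dvd_mul_left k m) (by positivity)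
      omega
    · simp [padicValNat.eq_zero_of_not_dvd h]

private lemma key2 (d q : ℕ) (hd : 2 ≤ d) (hq : 2 ≤ q) (hcop : Nat.Coprime d q) :
    ∃ K : ℕ, 0 < K ∧ ∀ s n : ℕ, 1 ≤ s → 1 ≤ n → d ^ s ∣ q ^ n - 1 → d ^ s ≤ K * n := by
  classical
  have hd0 : d ≠ 0 := by omega
  -- choose constants per prime
  have hc : ∀ p ∈ d.primeFactors,
      ∃ c : ℕ, ∀ n : ℕ, n ≠ 0 → padicValNat p (q ^ n - 1) ≤ c + padicValNat p n := by
    intro p hpmem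
    have hp : p.Prime := Nat.prime_of_mem_primeFactors hpmem
    have hpd : p ∣ d := Nat.dvd_of_mem_primeFactors hpmem
    have hpq : ¬ p ∣ q := (Nat.Prime.coprime_iff_not_dvd hp).mp (hcop.coprime_dvd_left hpd)
    exact keyP p q hp hq hpq
  choose! c hcspec using hc
  refine ⟨∏ p ∈ d.primeFactors, p ^ c p, Finset.prod_pos (fun p hpmem =>
    pow_pos (Nat.prime_of_mem_primeFactors hpmem).pos _), ?_⟩
  intro s n hs hn hdvd
  have hn0 : n ≠ 0 := by omega
  have hqn : q ^ n - 1 ≠ 0 := by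
    have : 1 < q ^ n := Nat.one_lt_pow hn0 hq
    omega
  -- d^s as a product
  have hdprod : d ^ s = ∏ p ∈ d.primeFactors, p ^ (d.factorization p * s) := by
    conv_lhs => rw [← Nat.factorization_prod_pow_eq_self hd0]
    rw [Nat.prod_factorization_eq_prod_primeFactors, ← Finset.prod_pow]
    exact Finset.prod_congr rfl (fun p _ => by rw [← pow_mul])
  -- bound each factor
  have hbound : ∀ p ∈ d.primeFactors,
      p ^ (d.factorization p * s) ≤ p ^ c p * p ^ padicValNat p n := by
    intro p hpmem
    have hp : p.Prime := Nat.prime_of_mem_primeFactors hpmem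
    haveI : Fact p.Prime := ⟨hp⟩
    have hpd : p ∣ d := Nat.dvd_of_mem_primeFactors hpmem
    have h1 : p ^ (d.factorization p * s) ∣ q ^ n - 1 := by
      calc p ^ (d.factorization p * s) = (p ^ d.factorization p) ^ s := by rw [pow_mul]
        _ ∣ d ^ s := pow_dvd_pow_of_dvd (Nat.ordProj_dvd d p) s
        _ ∣ q ^ n - 1 := hdvd
    have h2 : d.factorization p * s ≤ padicValNat p (q ^ n - 1) :=
      (padicValNat_dvd_iff_le hqn).mp h1
    have h3 := hcspec p hpmem n hn0
    calc p ^ (d.factorization p * s) ≤ p ^ (c p + padicValNat p n) :=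
          Nat.pow_le_pow_right hp.pos (by omega)
      _ = p ^ c p * p ^ padicValNat p n := pow_add p _ _
  -- the product of p-parts of n divides n
  have hMdvd : (∏ p ∈ d.primeFactors, p ^ padicValNat p n) ∣ n := by
    have heq : ∀ p ∈ d.primeFactors, padicValNat p n = n.factorization p := by
      intro p hpmem
      rw [Nat.factorization_def n (Nat.prime_of_mem_primeFactors hpmem)]
    have heq2 : (∏ p ∈ d.primeFactors, p ^ padicValNat p n)
        = ∏ p ∈ d.primeFactors, p ^ n.factorization p :=
      Finset.prod_congr rfl (fun p hp => by rw [heq p hp])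
    rw [heq2]
    have hsub : (∏ p ∈ d.primeFactors, p ^ n.factorization p) ∣
        ∏ p ∈ d.primeFactors ∪ n.primeFactors, p ^ n.factorization p :=
      Finset.prod_dvd_prod_of_subset _ _ _ Finset.subset_union_left
    refine hsub.trans ?_
    have : ∏ p ∈ d.primeFactors ∪ n.primeFactors, p ^ n.factorization p
        = ∏ p ∈ n.primeFactors, p ^ n.factorization p := by
      refine (Finset.prod_subset Finset.subset_union_right ?_).symm
      intro p _ hpn
      have h0 : n.factorization p = 0 := by
        by_contra h
        exact hpn (by rw [← Nat.support_factorization]; exact Finsupp.mem_support_iff.mpr h)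
      rw [h0, pow_zero]
    have hn_eq : ∏ p ∈ n.primeFactors, p ^ n.factorization p = n := by
      conv_rhs => rw [← Nat.factorization_prod_pow_eq_self hn0]
      rw [Nat.prod_factorization_eq_prod_primeFactors]
    rw [this, hn_eq]
  calc d ^ s = ∏ p ∈ d.primeFactors, p ^ (d.factorization p * s) := hdprod
    _ ≤ ∏ p ∈ d.primeFactors, (p ^ c p * p ^ padicValNat p n) :=
        Finset.prod_le_prod (fun _ _ => Nat.zero_le _) hbound
    _ = (∏ p ∈ d.primeFactors, p ^ c p) * ∏ p ∈ d.primeFactors, p ^ padicValNat p n :=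
        Finset.prod_mul_distrib
    _ ≤ (∏ p ∈ d.primeFactors, p ^ c p) * n :=
        Nat.mul_le_mul_left _ (Nat.le_of_dvd (by omega) hMdvd)

theorem stmt9 (d : ℕ) (hd : 2 ≤ d) (F : Type*) [Field F] [Fintype F]
    (hcop : Nat.Coprime d (Fintype.card F)) :
    ∃ C : ℝ, 0 < C ∧
      ∀ (L : Type) (_ : Field L) (_ : Algebra F L) (_ : FiniteDimensional F L),
        ∀ s : ℕ, 1 ≤ s → (∃ x : L, orderOf x = d ^ s) →
          C * (d : ℝ) ^ s ≤ (Module.finrank F L : ℝ) := by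
  set q := Fintype.card F with hqdef
  have hq : 2 ≤ q := Fintype.one_lt_card
  obtain ⟨K, hK, hKspec⟩ := key2 d q hd hq hcop
  refine ⟨(K : ℝ)⁻¹, by positivity, ?_⟩
  intro L _ _ _ s hs ⟨x, hx⟩
  classical
  haveI : Finite L := Module.finite_of_finite F
  haveI : Fintype L := Fintype.ofFinite L
  set n := Module.finrank F L with hndef
  have hn : 1 ≤ n := Module.finrank_pos
  have hcard : Fintype.card L = q ^ n := Module.card_eq_pow_finrank
  -- x is a unit
  have hxord : orderOf x ≠ 0 := by rw [hx]; positivity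
  have hds1 : 1 ≤ d ^ s := Nat.one_le_pow _ _ (by omega)
  have hxunit : IsUnit x := IsUnit.of_mul_eq_one (x ^ (d ^ s - 1)) (by
    have h1 : x ^ d ^ s = 1 := by rw [← hx]; exact pow_orderOf_eq_one x
    calc x * x ^ (d ^ s - 1) = x ^ (d ^ s - 1 + 1) := (pow_succ' x _).symm
      _ = x ^ d ^ s := by congr 1; omega
      _ = 1 := h1)
  obtain ⟨u, rfl⟩ := hxunit
  have hdvd : d ^ s ∣ q ^ n - 1 := by
    have h1 : orderOf u = d ^ s := by rw [← orderOf_units, hx]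
    have h2 : orderOf u ∣ Fintype.card Lˣ := orderOf_dvd_card
    rwa [h1, Fintype.card_units, hcard] at h2
  have hmain : d ^ s ≤ K * n := hKspec s n hs hn hdvd
  rw [inv_mul_le_iff₀ (by positivity)]
  calc ((d:ℝ)) ^ s = ((d ^ s : ℕ) : ℝ) := by push_cast; ring
    _ ≤ ((K * n : ℕ) : ℝ) := Nat.cast_le.mpr hmain
    _ = (K : ℝ) * n := by push_cast; ring
end
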